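/- Let o_m be the quotient of a complete discrete valuation ring by the m-th power of its maximal ideal, with residue field of even characteristic. For any unit u ∈ o_m^× and any v ∈ o_m, every unit w ∈ o_m^× can be written as w = x² + u·x·y + v·y² for some x, y ∈ o_m. -/

import Mathlib

/-- in `o_m = O/(π^m)` with residue field of even characteristic,
for any unit `u` and any `v`, every unit `w` can be written as `x² + u·x·y + v·y²`. -/
theorem stmt_2 {O : Type*} [CommRing O] [IsDomain O] [IsDiscreteValuationRing O]
    (π : O) (hπ : Irreducible π)
    [IsAdicComplete (Ideal.span {π}) O] [Finite (O ⧸ Ideal.span {π})]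
    (hres2 : π ∣ 2)
    (m : ℕ) (hm : 1 ≤ m)
    (u : (O ⧸ Ideal.span {π ^ m})ˣ) (v : O ⧸ Ideal.span {π ^ m})
    (w : (O ⧸ Ideal.span {π ^ m})ˣ) :
    ∃ x y : O ⧸ Ideal.span {π ^ m},
      (w : O ⧸ Ideal.span {π ^ m}) =
        x ^ 2 + (u : O ⧸ Ideal.span {π ^ m}) * x * y + v * y ^ 2 := by
  classical
  obtain ⟨a, ha⟩ := Ideal.Quotient.mk_surjective (u : O ⧸ Ideal.span {π ^ m})
  obtain ⟨b, hb⟩ := Ideal.Quotient.mk_surjective v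
  obtain ⟨c, hc⟩ := Ideal.Quotient.mk_surjective (w : O ⧸ Ideal.span {π ^ m})
  have hmaxP : (Ideal.span {π} : Ideal O).IsMaximal := by
    rw [← hπ.maximalIdeal_eq]; infer_instance
  haveI : (Ideal.span {π} : Ideal O).IsPrime := hmaxP.isPrime
  have hIle : (Ideal.span {π ^ m} : Ideal O) ≤ Ideal.span {π} :=
    Ideal.span_singleton_le_span_singleton.mpr (dvd_pow_self π (by omega))
  -- lifts of units of O ⧸ (π^m) are nonzero mod π
  have hunit : ∀ z : O, IsUnit (Ideal.Quotient.mk (Ideal.span {π ^ m}) z) →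
      Ideal.Quotient.mk (Ideal.span {π}) z ≠ 0 := by
    intro z hz hz0
    obtain ⟨d, hd⟩ := Ideal.Quotient.mk_surjective
      (↑hz.unit⁻¹ : O ⧸ Ideal.span {π ^ m})
    have h1 : Ideal.Quotient.mk (Ideal.span {π ^ m}) (z * d) = 1 := by
      rw [map_mul, hd, hz.mul_val_inv]
    have h2 : z * d - 1 ∈ (Ideal.span {π ^ m} : Ideal O) := by
      rw [← Ideal.Quotient.eq_zero_iff_mem, map_sub, h1, map_one, sub_self]
    have h3 : Ideal.Quotient.mk (Ideal.span {π}) (z * d - 1) = 0 :=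
      Ideal.Quotient.eq_zero_iff_mem.mpr (hIle h2)
    rw [map_sub, map_mul, hz0, zero_mul, map_one] at h3
    simp at h3
  have ha0 : Ideal.Quotient.mk (Ideal.span {π}) a ≠ 0 := hunit a (ha ▸ u.isUnit)
  have hc0 : Ideal.Quotient.mk (Ideal.span {π}) c ≠ 0 := hunit c (hc ▸ w.isUnit)
  -- char 2
  have h2 : (2 : O ⧸ Ideal.span {π}) = 0 := by
    have : Ideal.Quotient.mk (Ideal.span {π}) 2 = 0 :=
      Ideal.Quotient.eq_zero_iff_mem.mpr (Ideal.mem_span_singleton.mpr hres2)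
    rwa [map_ofNat] at this
  -- squaring is surjective on the residue field
  have hsq : ∀ z : O ⧸ Ideal.span {π}, ∃ x, x * x = z := by
    have hinj : Function.Injective (fun z : O ⧸ Ideal.span {π} => z * z) := by
      intro z₁ z₂ h
      simp only at h
      have h2'' : (2 : O ⧸ Ideal.span {π}) * (z₂ * z₂ - z₁ * z₂) = 0 := by
        rw [h2, zero_mul]
      have h4 : (z₁ - z₂) * (z₁ - z₂) = 0 := by linear_combination h + h2''
      exact sub_eq_zero.mp (mul_self_eq_zero.mp h4)
    intro z
    exact (Finite.injective_iff_surjective.mp hinj) z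
  obtain ⟨x', hx'⟩ := hsq (Ideal.Quotient.mk (Ideal.span {π}) c)
  obtain ⟨x, hx⟩ := Ideal.Quotient.mk_surjective x'
  have hx2 : π ∣ x * x - c := by
    rw [← Ideal.mem_span_singleton, ← Ideal.Quotient.eq_zero_iff_mem, map_sub,
      map_mul, hx, hx', sub_self]
  have hx0 : Ideal.Quotient.mk (Ideal.span {π}) x ≠ 0 := by
    intro h
    rw [h] at hx
    rw [← hx, zero_mul] at hx'
    exact hc0 hx'.symm
  have hax0 : Ideal.Quotient.mk (Ideal.span {π}) a *
      Ideal.Quotient.mk (Ideal.span {π}) x ≠ 0 := mul_ne_zero ha0 hx0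
  -- multiplication by the unit a*x is surjective on the finite residue field
  have hmulsurj : ∀ z : O ⧸ Ideal.span {π}, ∃ t,
      Ideal.Quotient.mk (Ideal.span {π}) a * Ideal.Quotient.mk (Ideal.span {π}) x * t
        = z := by
    have hinj : Function.Injective (fun t : O ⧸ Ideal.span {π} =>
        Ideal.Quotient.mk (Ideal.span {π}) a * Ideal.Quotient.mk (Ideal.span {π}) x * t) :=
      fun t₁ t₂ h => mul_left_cancel₀ hax0 h
    intro z
    exact (Finite.injective_iff_surjective.mp hinj) z
  -- main induction
  have key : ∀ k : ℕ, ∃ y : O, π ^ (k + 1) ∣ (x ^ 2 + a * x * y + b * y ^ 2 - c) := by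
    intro k
    induction k with
    | zero => exact ⟨0, by simpa [pow_two] using hx2⟩
    | succ k ih =>
      obtain ⟨y, hy⟩ := ih
      obtain ⟨s, hs⟩ := hy
      obtain ⟨t', ht'⟩ := hmulsurj (-(Ideal.Quotient.mk (Ideal.span {π}) s))
      obtain ⟨t, ht⟩ := Ideal.Quotient.mk_surjective t'
      have haxt : π ∣ s + a * x * t := by
        rw [← Ideal.mem_span_singleton, ← Ideal.Quotient.eq_zero_iff_mem, map_add,
          map_mul, map_mul, ht, ht']
        ring
      refine ⟨y + π ^ (k + 1) * t, ?_⟩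
      have expand : x ^ 2 + a * x * (y + π ^ (k + 1) * t) + b * (y + π ^ (k + 1) * t) ^ 2 - c
          = π ^ (k + 1) * (s + a * x * t) + π ^ (k + 1) * (2 * (b * y * t))
            + π ^ (k + 1) * π ^ (k + 1) * (b * t ^ 2) := by
        linear_combination hs
      rw [expand]
      refine dvd_add (dvd_add ?_ ?_) ?_
      · rw [pow_succ]
        exact mul_dvd_mul_left _ haxt
      · rw [pow_succ]
        exact mul_dvd_mul_left _ (hres2.mul_right _)
      · calc π ^ (k + 1 + 1) ∣ π ^ (k + 1) * π ^ (k + 1) := by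
              rw [← pow_add]; exact pow_dvd_pow π (by omega)
          _ ∣ _ := dvd_mul_right _ _
  obtain ⟨y, hy⟩ := key (m - 1)
  rw [show m - 1 + 1 = m by omega] at hy
  refine ⟨Ideal.Quotient.mk (Ideal.span {π ^ m}) x,
    Ideal.Quotient.mk (Ideal.span {π ^ m}) y, ?_⟩
  rw [← hc, ← ha, ← hb]
  have hz : Ideal.Quotient.mk (Ideal.span {π ^ m}) (x ^ 2 + a * x * y + b * y ^ 2 - c) = 0 :=
    Ideal.Quotient.eq_zero_iff_mem.mpr (Ideal.mem_span_singleton.mpr hy)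
  rw [map_sub, map_add, map_add, map_mul, map_mul, map_mul, map_pow, map_pow,
    sub_eq_zero] at hz
  exact hz.symm
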